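/- For all integers m ≥ 1, j ≥ 0, 0 ≤ r ≤ m−1, and k ≥ 0, the number of k-element subsets of {1,…,mj+r} in which no two elements differ by exactly m equals the sum, over all m-tuples (k_1,…,k_m) of nonnegative integers with k_1+⋯+k_m = k, of the products ∏_{i=1}^{r} C(j+2−k_i, k_i) · ∏_{i=r+1}^{m} C(j+1−k_i, k_i), where C(a,b) is the binomial coefficient and subtraction is truncated at 0. (This expresses the paper's bijection between tilings of a board by squares and (1,m−1)-fences and tilings of an m-tuple of shorter boards by squares and dominoes.) -/

import Mathlib

open Finset

/-- good κ-subsets of `range ℓ`: no two consecutive elements. -/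
private def G (ℓ κ : ℕ) : Finset (Finset ℕ) :=
  ((Finset.range ℓ).powersetCard κ).filter (fun T => ∀ q ∈ T, q + 1 ∉ T)

private def A (ℓ κ : ℕ) : ℕ := (G ℓ κ).card

private lemma mem_G {ℓ κ : ℕ} {T : Finset ℕ} :
    T ∈ G ℓ κ ↔ T ⊆ Finset.range ℓ ∧ T.card = κ ∧ ∀ q ∈ T, q + 1 ∉ T := by
  simp [G, Finset.mem_powersetCard, and_assoc]

private lemma A_zero_right (ℓ : ℕ) : A ℓ 0 = 1 := by
  have : G ℓ 0 = {∅} := by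
    ext T
    simp only [mem_G, Finset.mem_singleton, Finset.card_eq_zero]
    constructor
    · rintro ⟨-, rfl, -⟩; rfl
    · rintro rfl; simp
  simp [A, this]

private lemma A_succ_succ (ℓ κ : ℕ) : A (ℓ + 2) (κ + 1) = A (ℓ + 1) (κ + 1) + A ℓ κ := by
  classical
  have hsplit := Finset.card_filter_add_card_filter_not
    (s := G (ℓ + 2) (κ + 1)) (p := fun T => ℓ + 1 ∈ T)
  have h1 : (G (ℓ + 2) (κ + 1)).filter (fun T => ¬ (ℓ + 1 ∈ T)) = G (ℓ + 1) (κ + 1) := by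
    ext T
    simp only [Finset.mem_filter, mem_G]
    constructor
    · rintro ⟨⟨hsub, hcard, hgood⟩, hnot⟩
      refine ⟨fun q hq => ?_, hcard, hgood⟩
      have := hsub hq
      simp only [Finset.mem_range] at this ⊢
      rcases Nat.lt_succ_iff_lt_or_eq.mp this with h | h
      · exact h
      · exact absurd (h ▸ hq) hnot
    · rintro ⟨hsub, hcard, hgood⟩
      refine ⟨⟨fun q hq => ?_, hcard, hgood⟩, fun hmem => ?_⟩
      · have := hsub hq; simp only [Finset.mem_range] at this ⊢; omega
      · have := hsub hmem; simp at this
  have h2 : ((G (ℓ + 2) (κ + 1)).filter (fun T => ℓ + 1 ∈ T)).card = A ℓ κ := by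
    refine Finset.card_bij' (i := fun T _ => T.erase (ℓ + 1)) (j := fun T _ => insert (ℓ + 1) T)
      ?hi ?hj ?li ?ri
    case hi =>
      intro T hT
      simp only [Finset.mem_filter, mem_G] at hT
      obtain ⟨⟨hsub, hcard, hgood⟩, hmem⟩ := hT
      rw [mem_G]
      refine ⟨fun q hq => ?_, ?_, ?_⟩
      · obtain ⟨hne, hqT⟩ := Finset.mem_erase.mp hq
        have hlt := Finset.mem_range.mp (hsub hqT)
        have : q ≠ ℓ := by
          rintro rfl
          exact hgood q hqT hmem
        simp only [Finset.mem_range]; omega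
      · rw [Finset.card_erase_of_mem hmem, hcard]; omega
      · intro q hq
        obtain ⟨hne, hqT⟩ := Finset.mem_erase.mp hq
        intro hq1
        exact hgood q hqT (Finset.mem_of_mem_erase hq1)
    case hj =>
      intro T hT
      rw [mem_G] at hT
      obtain ⟨hsub, hcard, hgood⟩ := hT
      have hnotmem : ℓ + 1 ∉ T := fun h => absurd (Finset.mem_range.mp (hsub h)) (by omega)
      simp only [Finset.mem_filter, mem_G]
      refine ⟨⟨fun q hq => ?_, ?_, ?_⟩, Finset.mem_insert_self _ _⟩
      · rcases Finset.mem_insert.mp hq with rfl | hq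
        · simp
        · have := Finset.mem_range.mp (hsub hq); simp only [Finset.mem_range]; omega
      · rw [Finset.card_insert_of_notMem hnotmem, hcard]
      · intro q hq hq1
        rcases Finset.mem_insert.mp hq with h | h
        · rcases Finset.mem_insert.mp hq1 with h2 | h2
          · omega
          · have := Finset.mem_range.mp (hsub h2); omega
        · rcases Finset.mem_insert.mp hq1 with h2 | h2
          · have := Finset.mem_range.mp (hsub h); omega
          · exact hgood q h h2
    case li =>
      intro T hT
      simp only [Finset.mem_filter] at hT
      exact Finset.insert_erase hT.2
    case ri =>
      intro T hT
      rw [mem_G] at hT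
      have hnotmem : ℓ + 1 ∉ T := fun h => absurd (Finset.mem_range.mp (hT.1 h)) (by omega)
      exact Finset.erase_insert hnotmem
  have hA : A (ℓ + 2) (κ + 1) = ((G (ℓ + 2) (κ + 1)).filter (fun T => ℓ + 1 ∈ T)).card
      + (G (ℓ + 1) (κ + 1)).card := by
    rw [A, ← hsplit, h1]
  rw [hA, h2]
  have : A (ℓ + 1) (κ + 1) = (G (ℓ + 1) (κ + 1)).card := rfl
  omega

private lemma A_eq : ∀ ℓ κ, A ℓ κ = Nat.choose (ℓ + 1 - κ) κ
  | ℓ, 0 => by simp [A_zero_right]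
  | 0, κ + 1 => by
    have : G 0 (κ + 1) = ∅ := by
      rw [G, Finset.range_zero, Finset.powersetCard_eq_empty.mpr (by simp), Finset.filter_empty]
    have h2 : 0 + 1 - (κ + 1) = 0 := by omega
    simp [A, this, h2]
  | 1, κ + 1 => by
    rcases Nat.eq_zero_or_pos κ with rfl | hκ
    · have : G 1 1 = {{0}} := by
        have h0 : Finset.range 1 = {0} := by simp
        have h1 : ({0} : Finset ℕ).card = 1 := by simp
        rw [G, h0, ← h1, Finset.powersetCard_self]
        rw [Finset.filter_singleton]
        simp
      simp [A, this]
    · have : G 1 (κ + 1) = ∅ := by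
        rw [G, Finset.powersetCard_eq_empty.mpr (by simp; omega), Finset.filter_empty]
      have h2 : 1 + 1 - (κ + 1) = 1 - κ := by omega
      have h3 : (1 - κ).choose (κ + 1) = 0 := by
        apply Nat.choose_eq_zero_of_lt; omega
      simp [A, this, h2, h3]
  | (ℓ + 2), (κ + 1) => by
    rw [A_succ_succ, A_eq (ℓ + 1) (κ + 1), A_eq ℓ κ]
    rcases le_or_gt κ (ℓ + 1) with h | h
    · have h1 : ℓ + 2 + 1 - (κ + 1) = (ℓ + 1 - κ) + 1 := by omega
      have h2 : ℓ + 1 + 1 - (κ + 1) = ℓ + 1 - κ := by omega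
      rw [h1, h2, Nat.choose_succ_succ]
      simp only [Nat.succ_eq_add_one]
      omega
    · have h1 : ℓ + 2 + 1 - (κ + 1) = 0 := by omega
      have h2 : ℓ + 1 + 1 - (κ + 1) = 0 := by omega
      have h3 : ℓ + 1 - κ = 0 := by omega
      obtain ⟨κ', rfl⟩ : ∃ κ', κ = κ' + 1 := ⟨κ - 1, by omega⟩
      simp [h1, h2, h3]


/-- `Cm m N k` is the number of `k`-element subsets of `{1, …, N}` in which
no two elements differ by exactly `m`. -/
def Cm (m N k : ℕ) : ℕ :=
  (((Finset.Icc 1 N).powersetCard k).filter (fun S => ∀ a ∈ S, a + m ∉ S)).card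

private lemma decode_mod {m q i : ℕ} (hi : i < m) : (m * q + i) % m = i := by
  rw [Nat.mul_add_mod, Nat.mod_eq_of_lt hi]

private lemma decode_div {m q i : ℕ} (hi : i < m) : (m * q + i) / m = q := by
  rw [Nat.mul_add_div (by omega), Nat.div_eq_of_lt hi, Nat.add_zero]

/-- residue class `i` of `S`, re-indexed by quotient. -/
private def clsOf (m : ℕ) (S : Finset ℕ) (i : ℕ) : Finset ℕ :=
  (S.filter (fun x => (x - 1) % m = i)).image (fun x => (x - 1) / m)

private lemma mem_clsOf {m : ℕ} {S : Finset ℕ} (hS : ∀ x ∈ S, 1 ≤ x)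
    {i : ℕ} (hi : i < m) {q : ℕ} :
    q ∈ clsOf m S i ↔ m * q + i + 1 ∈ S := by
  constructor
  · intro hq
    simp only [clsOf, Finset.mem_image, Finset.mem_filter] at hq
    obtain ⟨x, ⟨hxS, hmod⟩, hdiv⟩ := hq
    have h1 := hS x hxS
    have h2 := Nat.div_add_mod (x - 1) m
    have h5 : m * ((x - 1) / m) = m * q := by rw [hdiv]
    have hx : x = m * q + i + 1 := by omega
    rwa [← hx]
  · intro hx
    simp only [clsOf, Finset.mem_image, Finset.mem_filter]
    refine ⟨m * q + i + 1, ⟨hx, ?_⟩, ?_⟩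
    · have h : m * q + i + 1 - 1 = m * q + i := by omega
      rw [h, decode_mod hi]
    · have h : m * q + i + 1 - 1 = m * q + i := by omega
      rw [h, decode_div hi]

private lemma sum_card_clsOf {m : ℕ} (hm : 1 ≤ m) {S : Finset ℕ} (hS : ∀ x ∈ S, 1 ≤ x) :
    ∑ i : Fin m, (clsOf m S (i : ℕ)).card = S.card := by
  classical
  have hfib : S.card = ∑ b : Fin m,
      (S.filter (fun x => (⟨(x - 1) % m, Nat.mod_lt _ (by omega)⟩ : Fin m) = b)).card := by
    apply Finset.card_eq_sum_card_fiberwise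
    intro x _
    exact Finset.mem_univ _
  rw [hfib]
  apply Finset.sum_congr rfl
  intro i _
  have hfilter : S.filter (fun x => (⟨(x - 1) % m, Nat.mod_lt _ (by omega)⟩ : Fin m) = i)
      = S.filter (fun x => (x - 1) % m = (i : ℕ)) := by
    apply Finset.filter_congr
    intro x _
    simp [Fin.ext_iff]
  rw [hfilter]
  rw [clsOf, Finset.card_image_of_injOn]
  intro x hx y hy hxy
  simp only [Finset.mem_coe, Finset.mem_filter] at hx hy
  have h1 := hS x hx.1
  have h2 := hS y hy.1
  have h3 := Nat.div_add_mod (x - 1) m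
  have h4 := Nat.div_add_mod (y - 1) m
  have h5 : m * ((x - 1) / m) = m * ((y - 1) / m) := congrArg (HMul.hMul m) hxy
  omega

private def recombine (m : ℕ) (f : Fin m → Finset ℕ) : Finset ℕ :=
  Finset.univ.biUnion (fun i : Fin m => (f i).image (fun q => m * q + (i : ℕ) + 1))

private lemma mem_recombine' {m : ℕ} {f : Fin m → Finset ℕ} {x : ℕ} :
    x ∈ recombine m f ↔ ∃ i : Fin m, ∃ q ∈ f i, x = m * q + (i : ℕ) + 1 := by
  simp only [recombine, Finset.mem_biUnion, Finset.mem_univ, true_and, Finset.mem_image]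
  constructor
  · rintro ⟨i, q, hq, rfl⟩; exact ⟨i, q, hq, rfl⟩
  · rintro ⟨i, q, hq, rfl⟩; exact ⟨i, q, hq, rfl⟩

private lemma mem_recombine {m : ℕ} {f : Fin m → Finset ℕ} (i : Fin m) (q : ℕ) :
    m * q + (i : ℕ) + 1 ∈ recombine m f ↔ q ∈ f i := by
  rw [mem_recombine']
  constructor
  · rintro ⟨i', q', hq', heq⟩
    have heq2 : m * q' + (i' : ℕ) = m * q + (i : ℕ) := by omega
    have e1 : (i' : ℕ) = (i : ℕ) := by
      rw [← decode_mod (q := q') i'.isLt, heq2, decode_mod i.isLt]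
    have e2 : q' = q := by
      rw [← decode_div (q := q') i'.isLt, heq2, decode_div i.isLt]
    have e3 : i' = i := Fin.ext e1
    subst e2; subst e3
    exact hq'
  · intro hq
    exact ⟨i, q, hq, rfl⟩

private lemma recombine_spec (m j r : ℕ) (hm : 1 ≤ m) (hr : r ≤ m - 1)
    (f : Fin m → Finset ℕ)
    (hfsub : ∀ i : Fin m, f i ⊆ Finset.range (if (i : ℕ) < r then j + 1 else j))
    (hfgood : ∀ i : Fin m, ∀ q ∈ f i, q + 1 ∉ f i) :
    recombine m f ⊆ Finset.Icc 1 (m * j + r)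
    ∧ (∀ i : Fin m, clsOf m (recombine m f) (i : ℕ) = f i)
    ∧ (∀ a ∈ recombine m f, a + m ∉ recombine m f)
    ∧ (recombine m f).card = ∑ i : Fin m, (f i).card := by
  have hsub : recombine m f ⊆ Finset.Icc 1 (m * j + r) := by
    intro x hx
    rw [mem_recombine'] at hx
    obtain ⟨i, q, hq, rfl⟩ := hx
    have hiq := Finset.mem_range.mp (hfsub i hq)
    have him : (i : ℕ) < m := i.isLt
    rw [Finset.mem_Icc]
    by_cases h : (i : ℕ) < r
    · rw [if_pos h] at hiq
      have h2 : m * q ≤ m * j := Nat.mul_le_mul_left m (by omega)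
      omega
    · rw [if_neg h] at hiq
      have h2 : m * (q + 1) ≤ m * j := Nat.mul_le_mul_left m (by omega)
      have h3 : m * (q + 1) = m * q + m := by ring
      omega
  have hS1 : ∀ x ∈ recombine m f, 1 ≤ x := fun x hx => (Finset.mem_Icc.mp (hsub hx)).1
  have hcls : ∀ i : Fin m, clsOf m (recombine m f) (i : ℕ) = f i := by
    intro i
    ext q
    rw [mem_clsOf hS1 i.isLt, mem_recombine]
  refine ⟨hsub, hcls, ?_, ?_⟩
  · intro a ha hma
    rw [mem_recombine'] at ha
    obtain ⟨i, q, hq, rfl⟩ := ha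
    have h3 : m * q + (i : ℕ) + 1 + m = m * (q + 1) + (i : ℕ) + 1 := by ring
    rw [h3, mem_recombine] at hma
    exact hfgood i q hq hma
  · rw [← sum_card_clsOf hm hS1]
    apply Finset.sum_congr rfl
    intro i _
    rw [hcls i]

private lemma clsOf_spec (m j r : ℕ) (hm : 1 ≤ m) (hr : r ≤ m - 1)
    {S : Finset ℕ} (hSsub : S ⊆ Finset.Icc 1 (m * j + r))
    (hSgood : ∀ a ∈ S, a + m ∉ S) (i : Fin m) :
    clsOf m S (i : ℕ) ∈ G (if (i : ℕ) < r then j + 1 else j) ((clsOf m S (i : ℕ)).card) := by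
  have hS1 : ∀ x ∈ S, 1 ≤ x := fun x hx => (Finset.mem_Icc.mp (hSsub hx)).1
  have him : (i : ℕ) < m := i.isLt
  rw [mem_G]
  refine ⟨?_, rfl, ?_⟩
  · intro q hq
    rw [mem_clsOf hS1 him] at hq
    have hx := (Finset.mem_Icc.mp (hSsub hq)).2
    rw [Finset.mem_range]
    by_cases h : (i : ℕ) < r
    · rw [if_pos h]
      by_contra hcon
      have h2 : m * (j + 1) ≤ m * q := Nat.mul_le_mul_left m (by omega)
      have h3 : m * (j + 1) = m * j + m := by ring
      omega
    · rw [if_neg h]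
      by_contra hcon
      have h2 : m * j ≤ m * q := Nat.mul_le_mul_left m (by omega)
      omega
  · intro q hq hq1
    rw [mem_clsOf hS1 him] at hq hq1
    have h3 : m * (q + 1) + (i : ℕ) + 1 = m * q + (i : ℕ) + 1 + m := by ring
    rw [h3] at hq1
    exact hSgood _ hq hq1


/-- The number of `k`-subsets of `{1, …, mj + r}` with no two elements differing
by exactly `m`, as a sum over `m`-tuples `(k₁, …, k_m)` summing to `k` of products
of the domino-tiling counts `C(j+2-kᵢ, kᵢ)` (first `r` boards) and
`C(j+1-kᵢ, kᵢ)` (remaining `m - r` boards). -/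
theorem stmt_11 (m j r k : ℕ) (hm : 1 ≤ m) (hr : r ≤ m - 1) :
    Cm m (m * j + r) k
      = ∑ t ∈ Finset.Nat.antidiagonalTuple m k,
          ∏ i : Fin m,
            if (i : ℕ) < r then Nat.choose (j + 2 - t i) (t i)
            else Nat.choose (j + 1 - t i) (t i) := by
  classical
  have key : Cm m (m * j + r) k = ((Finset.Nat.antidiagonalTuple m k).sigma
      (fun t => Fintype.piFinset (fun i : Fin m =>
        G (if (i : ℕ) < r then j + 1 else j) (t i)))).card := by
    rw [Cm]
    refine Finset.card_bij'
      (i := fun S _ => ⟨fun i : Fin m => (clsOf m S (i : ℕ)).card,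
        fun i : Fin m => clsOf m S (i : ℕ)⟩)
      (j := fun p _ => recombine m p.2)
      ?hi ?hj ?li ?ri
    case hi =>
      intro S hS
      simp only [Finset.mem_filter, Finset.mem_powersetCard] at hS
      obtain ⟨⟨hSsub, hScard⟩, hSgood⟩ := hS
      have hS1 : ∀ x ∈ S, 1 ≤ x := fun x hx => (Finset.mem_Icc.mp (hSsub hx)).1
      rw [Finset.mem_sigma]
      constructor
      · rw [Finset.Nat.mem_antidiagonalTuple]
        rw [sum_card_clsOf hm hS1, hScard]
      · rw [Fintype.mem_piFinset]
        intro i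
        exact clsOf_spec m j r hm hr hSsub hSgood i
    case hj =>
      rintro ⟨t, f⟩ hp
      rw [Finset.mem_sigma, Finset.Nat.mem_antidiagonalTuple, Fintype.mem_piFinset] at hp
      obtain ⟨ht, hf⟩ := hp
      have hf' : ∀ i : Fin m, f i ⊆ Finset.range (if (i : ℕ) < r then j + 1 else j)
          ∧ (f i).card = t i ∧ ∀ q ∈ f i, q + 1 ∉ f i := fun i => mem_G.mp (hf i)
      obtain ⟨hsub, hcls, hgood, hcard⟩ := recombine_spec m j r hm hr f
        (fun i => (hf' i).1) (fun i => (hf' i).2.2)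
      simp only [Finset.mem_filter, Finset.mem_powersetCard]
      refine ⟨⟨hsub, ?_⟩, hgood⟩
      rw [hcard, ← ht]
      exact Finset.sum_congr rfl (fun i _ => (hf' i).2.1)
    case li =>
      intro S hS
      simp only [Finset.mem_filter, Finset.mem_powersetCard] at hS
      obtain ⟨⟨hSsub, hScard⟩, hSgood⟩ := hS
      have hS1 : ∀ x ∈ S, 1 ≤ x := fun x hx => (Finset.mem_Icc.mp (hSsub hx)).1
      ext x
      rw [mem_recombine']
      constructor
      · rintro ⟨i, q, hq, rfl⟩
        exact (mem_clsOf hS1 i.isLt).mp hq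
      · intro hx
        have hx1 : 1 ≤ x := hS1 x hx
        refine ⟨⟨(x - 1) % m, Nat.mod_lt _ (by omega)⟩, (x - 1) / m, ?_, ?_⟩
        · have hdm := Nat.div_add_mod (x - 1) m
          have hxeq : m * ((x - 1) / m) + (x - 1) % m + 1 = x := by omega
          rw [mem_clsOf hS1 (Nat.mod_lt _ (by omega)), hxeq]
          exact hx
        · have hdm := Nat.div_add_mod (x - 1) m
          simp only
          omega
    case ri =>
      rintro ⟨t, f⟩ hp
      rw [Finset.mem_sigma, Finset.Nat.mem_antidiagonalTuple, Fintype.mem_piFinset] at hp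
      obtain ⟨ht, hf⟩ := hp
      have hf' : ∀ i : Fin m, f i ⊆ Finset.range (if (i : ℕ) < r then j + 1 else j)
          ∧ (f i).card = t i ∧ ∀ q ∈ f i, q + 1 ∉ f i := fun i => mem_G.mp (hf i)
      obtain ⟨hsub, hcls, hgood, hcard⟩ := recombine_spec m j r hm hr f
        (fun i => (hf' i).1) (fun i => (hf' i).2.2)
      refine Sigma.ext ?_ (heq_of_eq ?_)
      · funext i
        simp only
        rw [hcls i]
        exact (hf' i).2.1
      · funext i
        simp only
        exact hcls i
  rw [key, Finset.card_sigma]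
  apply Finset.sum_congr rfl
  intro t _
  rw [Fintype.card_piFinset]
  apply Finset.prod_congr rfl
  intro i _
  by_cases h : (i : ℕ) < r
  · rw [if_pos h, if_pos h]
    have : (G (j + 1) (t i)).card = A (j + 1) (t i) := rfl
    rw [this, A_eq]
  · rw [if_neg h, if_neg h]
    have : (G j (t i)).card = A j (t i) := rfl
    rw [this, A_eq]
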